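/- For the convex generator f(u) = (√u − 1)²/2, the squared Hellinger divergence between two Poincaré distributions p_θ and p_{θ′} (θ, θ′ real 2×2 symmetric positive-definite) equals 1 − 2·(det θ)^{1/4}·(det θ′)^{1/4}·exp((det θ)^{1/2} + (det θ′)^{1/2}) / ( (det(θ+θ′))^{1/2} · exp((det(θ+θ′))^{1/2}) ). -/

import Mathlib

open MeasureTheory Matrix

/-- The Poincaré density on the upper half-plane, as a density on `ℝ × ℝ`
(vanishing for `y ≤ 0`), indexed by a 2×2 symmetric positive-definite matrix. -/
noncomputable def poincareDensity (θ : Matrix (Fin 2) (Fin 2) ℝ) (z : ℝ × ℝ) : ℝ :=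
  if 0 < z.2 then
    Real.sqrt θ.det * Real.exp (2 * Real.sqrt θ.det) / Real.pi *
      Real.exp (-(θ 0 0 * (z.1 ^ 2 + z.2 ^ 2) + 2 * θ 0 1 * z.1 + θ 1 1) / z.2) / z.2 ^ 2
  else 0

/-- The `f`-divergence between two densities on the upper half-plane. -/
noncomputable def fDivH (f : ℝ → ℝ) (p q : ℝ × ℝ → ℝ) : ℝ :=
  ∫ z in {w : ℝ × ℝ | 0 < w.2}, p z * f (q z / p z)

section aux
open Set

lemma glasser {c : ℝ} (hc : 0 < c) :
    ∫ u in Set.Ioi (0:ℝ), Real.exp (-(u - c/u)^2) = Real.sqrt Real.pi / 2 := by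
  set s : ℝ → ℝ := fun v => Real.sqrt (v^2 + 4*c) with hs_def
  have hspos : ∀ v : ℝ, 0 < v^2 + 4*c := fun v => by positivity
  have hs0 : ∀ v : ℝ, 0 < s v := fun v => Real.sqrt_pos.2 (hspos v)
  have hssq : ∀ v : ℝ, (s v)^2 = v^2 + 4*c := fun v => Real.sq_sqrt (hspos v).le
  have habs : ∀ v : ℝ, |v| < s v := by
    intro v
    nlinarith [hssq v, sq_abs v, abs_nonneg v, hs0 v]
  set φ : ℝ → ℝ := fun v => (v + s v)/2 with hφ_def
  have hφpos : ∀ v : ℝ, 0 < φ v := by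
    intro v
    have h1 := habs v
    have h2 := neg_abs_le v
    simp only [hφ_def]
    linarith
  have hkey : ∀ v : ℝ, φ v - c / φ v = v := by
    intro v
    have h1 : φ v * (φ v - v) = c := by
      have : (s v)^2 = v^2 + 4*c := hssq v
      simp only [hφ_def]; nlinarith
    have h2 : c / φ v = φ v - v := by
      rw [div_eq_iff (hφpos v).ne']; nlinarith
    rw [h2]; ring
  -- derivative
  have hsder : ∀ v : ℝ, HasDerivAt s (v / s v) v := by
    intro v
    have h1 : HasDerivAt (fun v : ℝ => v^2 + 4*c) (2*v) v := by
      simpa using (hasDerivAt_pow 2 v).add_const (4*c)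
    have := h1.sqrt (ne_of_gt (hspos v))
    convert this using 1
    rw [mul_div_mul_left v _ (two_ne_zero)]
  have hφder : ∀ v : ℝ, HasDerivAt φ ((1 + v / s v)/2) v := by
    intro v
    exact ((hasDerivAt_id v).add (hsder v)).div_const 2
  have hφ'pos : ∀ v : ℝ, 0 < (1 + v / s v)/2 := by
    intro v
    have h1 : -1 < v / s v := by
      rw [lt_div_iff₀ (hs0 v)]
      nlinarith [neg_abs_le v, habs v]
    linarith
  -- image
  have himg : φ '' univ = Ioi (0:ℝ) := by
    apply Subset.antisymm
    · rintro _ ⟨v, -, rfl⟩; exact hφpos v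
    · rintro u hu
      have hu' : (0:ℝ) < u := hu
      refine ⟨u - c/u, trivial, ?_⟩
      have hsv : s (u - c/u) = u + c/u := by
        have h2 : (u - c/u)^2 + 4*c = (u + c/u)^2 := by field_simp; ring
        rw [hs_def]
        simp only [h2]
        exact Real.sqrt_sq (by positivity)
      simp only [hφ_def, hsv]
      ring
  have hinj : Function.Injective φ := by
    intro v w h
    have := hkey v
    rw [h, hkey w] at this
    linarith [this]
  -- substitution
  have hsub := integral_image_eq_integral_abs_deriv_smul (f' := fun v => (1 + v / s v)/2)
      MeasurableSet.univ (fun v _ => (hφder v).hasDerivWithinAt)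
      (hinj.injOn) (fun u => Real.exp (-(u - c/u)^2))
  rw [himg] at hsub
  rw [hsub]
  simp only [Measure.restrict_univ, smul_eq_mul]
  have heq : ∀ v : ℝ, |(1 + v / s v)/2| * Real.exp (-(φ v - c / φ v)^2)
      = (1/2) * Real.exp (-v^2) + (1/2) * (v / s v * Real.exp (-v^2)) := by
    intro v
    rw [abs_of_pos (hφ'pos v), hkey v]
    ring
  rw [integral_congr_ae (Filter.Eventually.of_forall heq)]
  have hg : Integrable (fun v : ℝ => Real.exp (-v^2)) := by
    simpa using integrable_exp_neg_mul_sq (one_pos)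
  have hodd_int : Integrable (fun v : ℝ => v / s v * Real.exp (-v^2)) := by
    apply hg.mono
    · apply Continuous.aestronglyMeasurable
      exact (continuous_id.div (by fun_prop) (fun v => (hs0 v).ne')).mul (by fun_prop)
    · refine Filter.Eventually.of_forall fun v => ?_
      simp only [norm_mul, Real.norm_eq_abs, abs_div, Real.abs_exp]
      rw [abs_of_pos (hs0 v)]
      have h1 : |v| / s v ≤ 1 := (div_le_one (hs0 v)).2 (habs v).le
      nlinarith [Real.exp_pos (-v^2), h1, abs_nonneg v, hs0 v]
  rw [integral_add (hg.const_mul _) (hodd_int.const_mul _)]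
  have hodd_zero : ∫ v : ℝ, v / s v * Real.exp (-v^2) = 0 := by
    have hneg : ∀ v : ℝ, (fun v : ℝ => v / s v * Real.exp (-v^2)) (-v)
        = - ((fun v : ℝ => v / s v * Real.exp (-v^2)) v) := by
      intro v
      simp [hs_def, neg_sq, neg_div]
    have := integral_neg_eq_self (fun v : ℝ => v / s v * Real.exp (-v^2)) (volume : Measure ℝ)
    simp only [hneg] at this
    rw [integral_neg] at this
    linarith
  rw [integral_const_mul, integral_const_mul, hodd_zero]
  have hgauss : ∫ v : ℝ, Real.exp (-v^2) = Real.sqrt Real.pi := by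
    have := integral_gaussian 1
    simpa using this
  rw [hgauss]
  linarith [hgauss]


lemma glasser_integrable {c : ℝ} (hc : 0 < c) :
    IntegrableOn (fun u => Real.exp (-(u - c/u)^2)) (Set.Ioi (0:ℝ)) := by
  have hg : Integrable (fun v : ℝ => Real.exp (2*c) * Real.exp (-v^2)) :=
    (by simpa using integrable_exp_neg_mul_sq (one_pos) : Integrable fun v : ℝ => Real.exp (-v^2)).const_mul _
  refine MeasureTheory.Integrable.mono (hg.restrict (s := Set.Ioi 0)) ?_ ?_
  · apply Measurable.aestronglyMeasurable
    fun_prop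
  · refine Filter.Eventually.of_forall fun u => ?_
    simp only [Real.norm_eq_abs, Real.abs_exp, norm_mul, abs_of_pos (Real.exp_pos _)]
    rw [← Real.exp_add]
    apply Real.exp_le_exp.2
    rcases eq_or_ne u 0 with rfl | hu
    · simp; nlinarith
    · have h : (u - c/u)^2 = u^2 - 2*c + (c/u)^2 := by field_simp; ring
      nlinarith [sq_nonneg (c/u)]

lemma bessel_half {p q : ℝ} (hp : 0 < p) (hq : 0 < q) :
    IntegrableOn (fun y => Real.sqrt y / y^2 * Real.exp (-(p*y + q/y))) (Set.Ioi (0:ℝ)) ∧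
    ∫ y in Set.Ioi (0:ℝ), Real.sqrt y / y^2 * Real.exp (-(p*y + q/y))
      = Real.sqrt (Real.pi/q) * Real.exp (-2*Real.sqrt (p*q)) := by
  set c := Real.sqrt (p*q) with hc_def
  have hc : 0 < c := Real.sqrt_pos.2 (by positivity)
  have hcsq : c^2 = p*q := Real.sq_sqrt (by positivity)
  set g : ℝ → ℝ := fun y => Real.sqrt y / y^2 * Real.exp (-(p*y + q/y)) with hg_def
  set ψ : ℝ → ℝ := fun u => q / u^2 with hψ_def
  have hψder : ∀ u ∈ Set.Ioi (0:ℝ), HasDerivWithinAt ψ (-(2*q)/u^3) (Set.Ioi 0) u := by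
    intro u hu
    have hu' : (0:ℝ) < u := hu
    have h1 : HasDerivAt (fun u : ℝ => u^2) (2*u) u := by simpa using hasDerivAt_pow 2 u
    have h2 := (h1.inv (by positivity)).const_mul q
    have h3 : q * (-(2*u) / (u^2)^2) = -(2*q)/u^3 := by field_simp
    rw [h3] at h2
    have h4 : HasDerivAt ψ (-(2*q)/u^3) u := by
      simpa [hψ_def, div_eq_mul_inv] using h2
    exact h4.hasDerivWithinAt
  have hψinj : Set.InjOn ψ (Set.Ioi 0) := by
    intro u hu v hv h
    simp only [hψ_def] at h
    have hu' : (0:ℝ) < u := hu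
    have hv' : (0:ℝ) < v := hv
    rw [div_eq_div_iff (by positivity) (by positivity)] at h
    have h2 : u^2 = v^2 := mul_left_cancel₀ hq.ne' h.symm
    exact (pow_left_inj₀ hu'.le hv'.le two_ne_zero).1 h2
  have hψimg : ψ '' Set.Ioi 0 = Set.Ioi (0:ℝ) := by
    apply Subset.antisymm
    · rintro _ ⟨u, hu, rfl⟩
      have : (0:ℝ) < u := hu
      exact div_pos hq (by positivity)
    · rintro y hy
      have hy' : (0:ℝ) < y := hy
      refine ⟨Real.sqrt (q/y), Real.sqrt_pos.2 (div_pos hq hy'), ?_⟩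
      simp only [hψ_def]
      rw [Real.sq_sqrt (div_pos hq hy').le]
      field_simp
  -- pointwise identity on Ioi 0
  have hpt : ∀ u ∈ Set.Ioi (0:ℝ),
      |(-(2*q)/u^3)| • g (ψ u) = (2 / Real.sqrt q * Real.exp (-(2*c))) * Real.exp (-(u - c/u)^2) := by
    intro u hu
    have hu' : (0:ℝ) < u := hu
    have hsq : Real.sqrt (q/u^2) = Real.sqrt q / u := by
      rw [Real.sqrt_div hq.le, Real.sqrt_sq hu'.le]
    have habs : |(-(2*q)/u^3)| = 2*q/u^3 := by
      rw [show (-(2*q)/u^3 : ℝ) = -(2*q/u^3) by ring, abs_neg, abs_of_pos (by positivity)]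
    have hexp : p * (q/u^2) + q / (q/u^2) = (u - c/u)^2 + 2*c := by
      field_simp
      nlinarith [hcsq]
    have hsqq : (0:ℝ) < Real.sqrt q := Real.sqrt_pos.2 hq
    have hq2 : Real.sqrt q * Real.sqrt q = q := Real.mul_self_sqrt hq.le
    have hcoef : 2*q/u^3 * (Real.sqrt q / u / ((q/u^2)^2)) = 2 / Real.sqrt q := by
      rw [show ((q/u^2)^2 : ℝ) = q^2/u^4 by ring]
      field_simp
      linear_combination hq2
    simp only [hψ_def, hg_def, smul_eq_mul, habs]
    rw [hexp, neg_add, Real.exp_add, hsq]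
    rw [← hcoef]
    ring
  have hmeas : MeasurableSet (Set.Ioi (0:ℝ)) := measurableSet_Ioi
  have hint_iff := integrableOn_image_iff_integrableOn_abs_deriv_smul
      (f' := fun u => -(2*q)/u^3) hmeas hψder hψinj g
  rw [hψimg] at hint_iff
  have hval := integral_image_eq_integral_abs_deriv_smul
      (f' := fun u => -(2*q)/u^3) hmeas hψder hψinj g
  rw [hψimg] at hval
  have hcongr : (fun u => |(-(2*q)/u^3)| • g (ψ u)) =ᶠ[ae (volume.restrict (Set.Ioi 0))]
      (fun u => (2 / Real.sqrt q * Real.exp (-(2*c))) * Real.exp (-(u - c/u)^2)) := by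
    filter_upwards [ae_restrict_mem hmeas] with u hu using hpt u hu
  constructor
  · rw [hint_iff]
    exact (((glasser_integrable hc).const_mul _)).congr hcongr.symm
  · rw [hval, integral_congr_ae hcongr, integral_const_mul, glasser hc]
    rw [Real.sqrt_div Real.pi_pos.le]
    have : (0:ℝ) < Real.sqrt q := Real.sqrt_pos.2 hq
    field_simp


lemma poincare_norm {a b c : ℝ} (ha : 0 < a) (hD : 0 < a*c - b^2) :
    IntegrableOn (fun z : ℝ × ℝ => Real.exp (-(a*(z.1^2 + z.2^2) + 2*b*z.1 + c)/z.2) / z.2^2)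
      {w : ℝ × ℝ | 0 < w.2} ∧
    ∫ z in {w : ℝ × ℝ | 0 < w.2},
        Real.exp (-(a*(z.1^2 + z.2^2) + 2*b*z.1 + c)/z.2) / z.2^2
      = Real.pi / Real.sqrt (a*c - b^2) * Real.exp (-2*Real.sqrt (a*c - b^2)) := by
  set D := a*c - b^2 with hD_def
  set f : ℝ × ℝ → ℝ := fun z => Real.exp (-(a*(z.1^2 + z.2^2) + 2*b*z.1 + c)/z.2) / z.2^2
    with hf_def
  have hfnn : ∀ z : ℝ × ℝ, 0 ≤ f z := fun z => div_nonneg (Real.exp_pos _).le (sq_nonneg _)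
  have hset : {w : ℝ × ℝ | 0 < w.2} = (Set.univ : Set ℝ) ×ˢ Set.Ioi (0:ℝ) := by
    ext w; simp [Set.mem_prod]
  have hmeasμ : (volume : Measure (ℝ × ℝ)).restrict {w : ℝ × ℝ | 0 < w.2}
      = (volume : Measure ℝ).prod ((volume : Measure ℝ).restrict (Set.Ioi 0)) := by
    rw [hset, Measure.volume_eq_prod, ← Measure.prod_restrict, Measure.restrict_univ]
  have hfact : ∀ (y : ℝ), 0 < y → ∀ x : ℝ,
      f (x, y) = Real.exp (-(a/y)*(x + b/a)^2) * (Real.exp (-(a*y + (D/a)/y)) / y^2) := by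
    intro y hy x
    simp only [hf_def]
    have h1 : -(a*(x^2 + y^2) + 2*b*x + c)/y
        = (-(a/y)*(x + b/a)^2) + (-(a*y + (D/a)/y)) := by
      rw [hD_def]; field_simp; ring
    rw [h1, Real.exp_add, mul_div_assoc]
  have hinner_int : ∀ y : ℝ, 0 < y → Integrable (fun x => f (x, y)) := by
    intro y hy
    have h1 : Integrable (fun x : ℝ => Real.exp (-(a/y)*(x + b/a)^2)) :=
      (integrable_exp_neg_mul_sq (div_pos ha hy)).comp_add_right (b/a)
    exact (h1.mul_const _).congr
      (Filter.Eventually.of_forall fun x => (hfact y hy x).symm)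
  have hinner_val : ∀ y : ℝ, 0 < y →
      ∫ x, f (x, y)
        = Real.sqrt (Real.pi/a) * (Real.sqrt y / y^2 * Real.exp (-(a*y + (D/a)/y))) := by
    intro y hy
    rw [integral_congr_ae (Filter.Eventually.of_forall (hfact y hy))]
    rw [integral_mul_const]
    rw [integral_add_right_eq_self (fun x => Real.exp (-(a/y)*x^2)) (b/a)]
    rw [integral_gaussian]
    have h2 : Real.pi / (a/y) = (Real.pi/a) * y := by field_simp
    rw [h2, Real.sqrt_mul (by positivity)]
    ring
  have hmeasf : AEStronglyMeasurable f
      ((volume : Measure ℝ).prod ((volume : Measure ℝ).restrict (Set.Ioi 0))) := by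
    apply Measurable.aestronglyMeasurable
    simp only [hf_def]
    fun_prop
  have hbint := bessel_half ha (div_pos hD ha)
  have hnormeq : ∀ y : ℝ, (fun x => ‖f (x, y)‖) = fun x => f (x, y) :=
    fun y => funext fun x => by rw [Real.norm_eq_abs, abs_of_nonneg (hfnn _)]
  have hnormint : Integrable (fun y => ∫ x, ‖f (x, y)‖)
      ((volume : Measure ℝ).restrict (Set.Ioi 0)) := by
    apply (hbint.1.const_mul (Real.sqrt (Real.pi/a))).congr
    filter_upwards [ae_restrict_mem measurableSet_Ioi] with y hy
    rw [hnormeq y, hinner_val y hy]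
  have hInt : Integrable f
      ((volume : Measure ℝ).prod ((volume : Measure ℝ).restrict (Set.Ioi 0))) := by
    rw [integrable_prod_iff' hmeasf]
    refine ⟨?_, hnormint⟩
    filter_upwards [ae_restrict_mem measurableSet_Ioi] with y hy using hinner_int y hy
  constructor
  · rw [IntegrableOn, hmeasμ]; exact hInt
  · rw [show (∫ z in {w : ℝ × ℝ | 0 < w.2}, f z)
        = ∫ z, f z ∂((volume : Measure ℝ).prod ((volume : Measure ℝ).restrict (Set.Ioi 0)))
        by rw [← hmeasμ]]
    rw [integral_prod_symm f hInt]
    have hcongr : ∀ᵐ y ∂((volume : Measure ℝ).restrict (Set.Ioi 0)),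
        (∫ x, f (x, y))
          = Real.sqrt (Real.pi/a) * (Real.sqrt y / y^2 * Real.exp (-(a*y + (D/a)/y))) := by
      filter_upwards [ae_restrict_mem measurableSet_Ioi] with y hy using hinner_val y hy
    rw [integral_congr_ae hcongr, integral_const_mul, hbint.2]
    have hDa : a * (D/a) = D := by field_simp
    rw [hDa, ← mul_assoc, ← Real.sqrt_mul (by positivity)]
    rw [show Real.pi/a * (Real.pi/(D/a)) = Real.pi^2 / D by field_simp]
    rw [Real.sqrt_div (sq_nonneg _), Real.sqrt_sq Real.pi_pos.le]

lemma hell_pointwise {p q : ℝ} (hp : 0 < p) (hq : 0 ≤ q) :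
    p * ((Real.sqrt (q/p) - 1)^2/2) = p/2 + q/2 - Real.sqrt (p*q) := by
  have hsp : Real.sqrt p ^ 2 = p := Real.sq_sqrt hp.le
  have hsq : Real.sqrt q ^ 2 = q := Real.sq_sqrt hq
  have hp' : 0 < Real.sqrt p := Real.sqrt_pos.2 hp
  rw [Real.sqrt_div hq, Real.sqrt_mul hp.le]
  field_simp
  ring_nf
  have h3 : Real.sqrt p ^ 3 = p * Real.sqrt p := by rw [show (3:ℕ) = 2 + 1 from rfl, pow_succ, hsp]
  simp only [h3, hsp, hsq]
  ring

lemma posdef_entry00 {θ : Matrix (Fin 2) (Fin 2) ℝ} (h : θ.PosDef) : 0 < θ 0 0 := by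
  exact h.diag_pos


end aux

/-- closed form of the squared Hellinger divergence
(f(u) = (√u − 1)²/2) between two Poincaré distributions. -/
theorem hellinger_poincare (θ θ' : Matrix (Fin 2) (Fin 2) ℝ)
    (hθ : θ.PosDef) (hθ' : θ'.PosDef) :
    fDivH (fun u => (Real.sqrt u - 1) ^ 2 / 2) (poincareDensity θ) (poincareDensity θ') =
      1 - 2 * θ.det ^ ((1 : ℝ) / 4) * θ'.det ^ ((1 : ℝ) / 4) *
          Real.exp (θ.det ^ ((1 : ℝ) / 2) + θ'.det ^ ((1 : ℝ) / 2)) /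
        ((θ + θ').det ^ ((1 : ℝ) / 2) * Real.exp ((θ + θ').det ^ ((1 : ℝ) / 2))) := by
  have hb : θ 1 0 = θ 0 1 := by simpa using hθ.isHermitian.apply 0 1
  have hb' : θ' 1 0 = θ' 0 1 := by simpa using hθ'.isHermitian.apply 0 1
  have ha : 0 < θ 0 0 := posdef_entry00 hθ
  have ha' : 0 < θ' 0 0 := posdef_entry00 hθ'
  have hD : 0 < θ.det := hθ.det_pos
  have hD' : 0 < θ'.det := hθ'.det_pos
  have hΔ : 0 < (θ + θ').det := (hθ.add hθ').det_pos
  set a := θ 0 0 with ha_def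
  set b := θ 0 1 with hb_def
  set c := θ 1 1 with hc_def
  set a' := θ' 0 0 with ha'_def
  set b' := θ' 0 1 with hb'_def
  set c' := θ' 1 1 with hc'_def
  set D := θ.det with hD_def
  set D' := θ'.det with hD'_def
  set Δ := (θ + θ').det with hΔ_def
  have hdet_eq : D = a*c - b^2 := by rw [hD_def, det_fin_two, hb]; ring
  have hdet_eq' : D' = a'*c' - b'^2 := by rw [hD'_def, det_fin_two, hb']; ring
  have hΔ_eq : Δ = (a+a')*(c+c') - (b+b')^2 := by
    rw [hΔ_def, det_fin_two]
    simp only [Matrix.add_apply, ← ha_def, ← hb_def, ← hc_def, ← ha'_def, ← hb'_def, ← hc'_def,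
      hb, hb']
    ring
  set N := Real.sqrt D * Real.exp (2 * Real.sqrt D) / Real.pi with hN_def
  set N' := Real.sqrt D' * Real.exp (2 * Real.sqrt D') / Real.pi with hN'_def
  have hNpos : 0 < N := by
    rw [hN_def]; positivity
  have hN'pos : 0 < N' := by
    rw [hN'_def]; positivity
  set fθ : ℝ × ℝ → ℝ := fun z => Real.exp (-(a*(z.1^2 + z.2^2) + 2*b*z.1 + c)/z.2) / z.2^2
    with hfθ_def
  set fθ' : ℝ × ℝ → ℝ := fun z => Real.exp (-(a'*(z.1^2 + z.2^2) + 2*b'*z.1 + c')/z.2) / z.2^2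
    with hfθ'_def
  set fm : ℝ × ℝ → ℝ := fun z =>
      Real.exp (-((a+a')/2*(z.1^2 + z.2^2) + 2*((b+b')/2)*z.1 + (c+c')/2)/z.2) / z.2^2
    with hfm_def
  have P1 := poincare_norm ha (hdet_eq ▸ hD)
  have P2 := poincare_norm ha' (hdet_eq' ▸ hD')
  have hm4 : (a+a')/2 * ((c+c')/2) - ((b+b')/2)^2 = Δ/4 := by rw [hΔ_eq]; ring
  have P3 := poincare_norm (a := (a+a')/2) (b := (b+b')/2) (c := (c+c')/2)
      (by linarith) (by rw [hm4]; linarith)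
  -- pointwise identity on the upper half plane
  have hpoint : ∀ z : ℝ × ℝ, z ∈ {w : ℝ × ℝ | 0 < w.2} →
      poincareDensity θ z * ((Real.sqrt (poincareDensity θ' z / poincareDensity θ z) - 1)^2/2)
        = N/2 * fθ z + N'/2 * fθ' z - Real.sqrt (N*N') * fm z := by
    intro z hz
    have hy : 0 < z.2 := hz
    have hpz : poincareDensity θ z = N * fθ z := by
      rw [poincareDensity, if_pos hy, hfθ_def, hN_def]
      rw [mul_div_assoc]
    have hqz : poincareDensity θ' z = N' * fθ' z := by
      rw [poincareDensity, if_pos hy, hfθ'_def, hN'_def]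
      rw [mul_div_assoc]
    have hfθpos : 0 < fθ z := by
      rw [hfθ_def]; positivity
    have hfθ'pos : 0 < fθ' z := by
      rw [hfθ'_def]; positivity
    have hfmpos : 0 < fm z := by
      rw [hfm_def]; positivity
    rw [hpz, hqz]
    rw [hell_pointwise (by positivity) (by positivity)]
    have hprod : (N * fθ z) * (N' * fθ' z) = (Real.sqrt (N*N') * fm z)^2 := by
      have h1 : Real.sqrt (N*N') ^ 2 = N * N' := Real.sq_sqrt (by positivity)
      have h2 : fθ z * fθ' z = fm z ^ 2 := by
        have hexp2 : Real.exp (-((a+a')/2*(z.1^2 + z.2^2) + 2*((b+b')/2)*z.1 + (c+c')/2)/z.2) ^ 2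
            = Real.exp (-(a*(z.1^2+z.2^2) + 2*b*z.1 + c)/z.2)
              * Real.exp (-(a'*(z.1^2+z.2^2) + 2*b'*z.1 + c')/z.2) := by
          rw [sq, ← Real.exp_add, ← Real.exp_add]
          congr 1
          field_simp
          ring
        simp only [hfθ_def, hfθ'_def, hfm_def]
        rw [div_pow, hexp2]
        ring
      rw [mul_pow, h1, ← h2]
      ring
    rw [hprod, Real.sqrt_sq (by positivity)]
    ring
  have hSmeas : MeasurableSet {w : ℝ × ℝ | 0 < w.2} :=
    measurableSet_lt measurable_const measurable_snd
  rw [fDivH]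
  rw [setIntegral_congr_fun hSmeas hpoint]
  have hI1 : IntegrableOn (fun z => N/2 * fθ z) {w : ℝ × ℝ | 0 < w.2} := P1.1.const_mul _
  have hI2 : IntegrableOn (fun z => N'/2 * fθ' z) {w : ℝ × ℝ | 0 < w.2} := P2.1.const_mul _
  have hI3 : IntegrableOn (fun z => Real.sqrt (N*N') * fm z) {w : ℝ × ℝ | 0 < w.2} :=
    P3.1.const_mul _
  have hI12 : IntegrableOn (fun z => N/2 * fθ z + N'/2 * fθ' z) {w : ℝ × ℝ | 0 < w.2} :=
    hI1.add hI2
  rw [integral_sub hI12 hI3, integral_add hI1 hI2,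
    integral_const_mul, integral_const_mul, integral_const_mul]
  rw [hfθ_def, hfθ'_def, hfm_def, P1.2, P2.2, P3.2]
  rw [← hdet_eq, ← hdet_eq', hm4]
  -- simplify square roots
  have hsD : 0 < Real.sqrt D := Real.sqrt_pos.2 hD
  have hsD' : 0 < Real.sqrt D' := Real.sqrt_pos.2 hD'
  have hsΔ : 0 < Real.sqrt Δ := Real.sqrt_pos.2 hΔ
  have h4 : Real.sqrt (Δ/4) = Real.sqrt Δ / 2 := by
    rw [Real.sqrt_div hΔ.le, show (4:ℝ) = 2^2 by norm_num, Real.sqrt_sq (by norm_num : (0:ℝ) ≤ 2)]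
  have e1 : Real.exp (Real.sqrt D + Real.sqrt D') ^ 2
      = Real.exp (2*Real.sqrt D) * Real.exp (2*Real.sqrt D') := by
    rw [sq, ← Real.exp_add, ← Real.exp_add]; ring_nf
  have e2 : Real.sqrt (Real.sqrt D * Real.sqrt D') ^ 2 = Real.sqrt D * Real.sqrt D' :=
    Real.sq_sqrt (by positivity)
  have hNN : Real.sqrt (N * N')
      = Real.sqrt (Real.sqrt D * Real.sqrt D') * Real.exp (Real.sqrt D + Real.sqrt D')
        / Real.pi := by
    have hsq : (Real.sqrt (Real.sqrt D * Real.sqrt D') * Real.exp (Real.sqrt D + Real.sqrt D')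
        / Real.pi)^2 = N * N' := by
      rw [div_pow, mul_pow, e2, e1, hN_def, hN'_def]
      field_simp
    rw [← hsq, Real.sqrt_sq (by positivity)]
  rw [hNN, h4]
  -- convert rpow on the RHS
  have hr2 : ∀ x : ℝ, x ^ ((1:ℝ)/2) = Real.sqrt x := fun x => (Real.sqrt_eq_rpow x).symm
  have hr4 : ∀ x : ℝ, 0 < x → x ^ ((1:ℝ)/4) = Real.sqrt (Real.sqrt x) := by
    intro x hx
    rw [Real.sqrt_eq_rpow, Real.sqrt_eq_rpow, ← Real.rpow_mul hx.le]
    norm_num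
  rw [hr4 D hD, hr4 D' hD', hr2 D, hr2 D', hr2 Δ]
  rw [Real.sqrt_mul (Real.sqrt_nonneg D)]
  rw [show (-2:ℝ) * (Real.sqrt Δ/2) = -Real.sqrt Δ by ring,
    show (-2:ℝ) * Real.sqrt D = -(2*Real.sqrt D) by ring,
    show (-2:ℝ) * Real.sqrt D' = -(2*Real.sqrt D') by ring]
  simp only [Real.exp_neg]
  rw [hN_def, hN'_def]
  have hπ := Real.pi_ne_zero
  field_simp
  ring
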